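/- For all natural numbers a, b with a ≥ 1 and b ≥ 1, the binomial coefficient satisfies a^b / b! ≤ C(a+b−1, b) ≤ (a^b / b!)·e^{b²/a}. -/

import Mathlib

lemma asc_lower (a : ℕ) (ha : 1 ≤ a) : ∀ b : ℕ, (a : ℝ) ^ b ≤ (a.ascFactorial b : ℝ)
  | 0 => by simp
  | b + 1 => by
    rw [Nat.ascFactorial_succ, pow_succ]
    push_cast
    have h1 := asc_lower a ha b
    have h2 : (0:ℝ) ≤ (a:ℝ)^b := by positivity
    nlinarith [Nat.ascFactorial_pos a b, (by exact_mod_cast ha : (1:ℝ) ≤ a)]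

lemma asc_upper (a : ℕ) (ha : 1 ≤ a) : ∀ b : ℕ,
    (a.ascFactorial b : ℝ) ≤ (a : ℝ) ^ b * Real.exp ((b : ℝ) ^ 2 / (a : ℝ))
  | 0 => by simp
  | b + 1 => by
    have hapos : (0:ℝ) < a := by exact_mod_cast ha
    have h1 := asc_upper a ha b
    have hab : ((a : ℝ) + b) ≤ (a : ℝ) * Real.exp ((b : ℝ) / a) := by
      have := Real.add_one_le_exp ((b : ℝ) / a)
      calc ((a : ℝ) + b) = a * ((b : ℝ)/a + 1) := by field_simp; ring
        _ ≤ a * Real.exp ((b : ℝ)/a) := by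
            apply mul_le_mul_of_nonneg_left this hapos.le
    rw [Nat.ascFactorial_succ]
    push_cast
    calc ((a : ℝ) + b) * (a.ascFactorial b : ℝ)
        ≤ ((a : ℝ) * Real.exp ((b:ℝ)/a)) * ((a : ℝ)^b * Real.exp ((b:ℝ)^2/a)) := by
          apply mul_le_mul hab h1 (by positivity) (by positivity)
      _ = (a : ℝ)^(b+1) * Real.exp ((b:ℝ)^2/a + (b:ℝ)/a) := by
          rw [Real.exp_add, pow_succ]; ring
      _ ≤ (a : ℝ)^(b+1) * Real.exp (((b:ℝ)+1)^2/a) := by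
          apply mul_le_mul_of_nonneg_left _ (by positivity)
          apply Real.exp_le_exp.mpr
          rw [← add_div, div_le_div_iff₀ hapos hapos]
          nlinarith
  
/-- For natural numbers `a, b ≥ 1`:
`a^b/b! ≤ C(a+b−1, b) ≤ (a^b/b!)·e^{b²/a}`. -/
theorem choose_bounds (a b : ℕ) (ha : 1 ≤ a) (hb : 1 ≤ b) :
    (a : ℝ) ^ b / (b.factorial : ℝ) ≤ ((a + b - 1).choose b : ℝ) ∧
    ((a + b - 1).choose b : ℝ) ≤ (a : ℝ) ^ b / (b.factorial : ℝ) *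
      Real.exp ((b : ℝ) ^ 2 / (a : ℝ)) := by
  have key : (a.ascFactorial b : ℝ) = (b.factorial : ℝ) * ((a + b - 1).choose b : ℝ) := by
    exact_mod_cast congrArg (Nat.cast : ℕ → ℝ) (Nat.ascFactorial_eq_factorial_mul_choose' a b)
  have hfac : (0:ℝ) < (b.factorial : ℝ) := by exact_mod_cast b.factorial_pos
  constructor
  · rw [div_le_iff₀ hfac, mul_comm, ← key]
    exact asc_lower a ha b
  · rw [div_mul_eq_mul_div, le_div_iff₀ hfac, mul_comm ((a+b-1).choose b : ℝ), ← key]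
    exact asc_upper a ha b
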